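/- For the Shannon entropy φ(x) = x ln x, if λ(b) denotes the dual optimal Lagrange multiplier (so ρ_b = exp(α + λ·a) and ψ_s is C² with ∇ψ_s(b) = λ(b)), then the Jacobian ∂λ/∂b at b₀ equals (∫_X a ⊗ a ρ_{b₀} dμ − b₀ ⊗ b₀)^{-1}; in particular the Hessian of ψ_s at b₀ is the inverse of the covariance matrix of a under the density ρ_{b₀}. -/

import Mathlib

open MeasureTheory
open scoped RealInnerProductSpace

set_option synthInstance.maxHeartbeats 1000000
set_option maxHeartbeats 1000000

open MeasureTheory
open scoped RealInnerProductSpace ENNReal NNReal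

lemma euclidean_abs_coord_le_norm {k : ℕ} (x : EuclideanSpace ℝ (Fin k)) (i : Fin k) :
    |x i| ≤ ‖x‖ := by
  rw [EuclideanSpace.norm_eq, ← Real.sqrt_sq_eq_abs]
  apply Real.sqrt_le_sqrt
  have : x i ^ 2 = ‖x i‖ ^ 2 := by rw [Real.norm_eq_abs, sq_abs]
  rw [this]
  exact Finset.single_le_sum (fun j _ => sq_nonneg ‖x j‖) (Finset.mem_univ i)

lemma exp_integral_hasFDerivAt {X : Type*} [MeasurableSpace X] (μ : Measure X)
    [IsFiniteMeasure μ] {k : ℕ} (a : X → EuclideanSpace ℝ (Fin k)) (ha : MemLp a ⊤ μ)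
    (c : X → ℝ) (hc : AEStronglyMeasurable c μ) (K : ℝ) (hK0 : 0 ≤ K)
    (hK : ∀ᵐ t ∂μ, |c t| ≤ K) (l₀ : EuclideanSpace ℝ (Fin k)) :
    HasFDerivAt (fun l : EuclideanSpace ℝ (Fin k) => ∫ t, c t * Real.exp ⟪l, a t⟫ ∂μ)
      (∫ t, (c t * Real.exp ⟪l₀, a t⟫) • innerSL ℝ (a t) ∂μ) l₀ ∧
    Integrable (fun t => (c t * Real.exp ⟪l₀, a t⟫) • innerSL ℝ (a t)) μ := by
  set M : ℝ := (eLpNorm a ⊤ μ).toReal with hMdef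
  have hM0 : 0 ≤ M := ENNReal.toReal_nonneg
  have hMlt : eLpNormEssSup a μ < ⊤ := by
    rw [← eLpNorm_exponent_top]; exact ha.2
  have hM : ∀ᵐ t ∂μ, ‖a t‖ ≤ M := by
    filter_upwards [enorm_ae_le_eLpNormEssSup a μ] with t ht
    calc ‖a t‖ = ((‖a t‖₊ : ℝ≥0∞)).toReal := by simp
      _ ≤ (eLpNormEssSup a μ).toReal := ENNReal.toReal_mono hMlt.ne ht
      _ = M := by rw [hMdef, eLpNorm_exponent_top]
  have hainner : ∀ t, (fun l : EuclideanSpace ℝ (Fin k) => ⟪l, a t⟫) = ⇑(innerSL ℝ (a t)) := by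
    intro t; funext l; exact (real_inner_comm l (a t)) ▸ rfl
  have hmeas : ∀ x : EuclideanSpace ℝ (Fin k),
      AEStronglyMeasurable (fun t => c t * Real.exp ⟪x, a t⟫) μ := by
    intro x
    exact hc.mul (Real.continuous_exp.comp_aestronglyMeasurable
      (AEStronglyMeasurable.inner aestronglyMeasurable_const ha.1))
  have hF'meas : AEStronglyMeasurable (fun t => (c t * Real.exp ⟪l₀, a t⟫) • innerSL ℝ (a t)) μ :=
    ((hmeas l₀)).smul ((innerSL ℝ (E := EuclideanSpace ℝ (Fin k))).continuous.comp_aestronglyMeasurable ha.1)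
  have hdiff : ∀ t, ∀ x : EuclideanSpace ℝ (Fin k),
      HasFDerivAt (fun l => c t * Real.exp ⟪l, a t⟫)
        ((c t * Real.exp ⟪x, a t⟫) • innerSL ℝ (a t)) x := by
    intro t x
    have h1 : HasFDerivAt (fun l : EuclideanSpace ℝ (Fin k) => ⟪l, a t⟫)
        (innerSL ℝ (a t)) x := by
      rw [hainner t]; exact (innerSL ℝ (a t)).hasFDerivAt
    have h2 := h1.exp
    have h3 := h2.const_mul (c t)
    simpa [smul_smul] using h3
  have hbnd : ∀ᵐ t ∂μ, ∀ x ∈ Metric.ball l₀ 1,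
      ‖(c t * Real.exp ⟪x, a t⟫) • innerSL ℝ (a t)‖ ≤ K * Real.exp ((‖l₀‖ + 1) * M) * M := by
    filter_upwards [hM, hK] with t htM htK
    intro x hx
    have hxn : ‖x‖ ≤ ‖l₀‖ + 1 := by
      have h1 := norm_sub_norm_le x l₀
      have h2 := mem_ball_iff_norm.mp hx
      linarith
    have hip : ⟪x, a t⟫ ≤ (‖l₀‖ + 1) * M :=
      le_trans (real_inner_le_norm x (a t))
        (mul_le_mul hxn htM (norm_nonneg _) (by positivity))
    apply ContinuousLinearMap.opNorm_le_bound _ (by positivity)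
    intro w
    have happ : ((c t * Real.exp ⟪x, a t⟫) • innerSL ℝ (a t)) w
        = (c t * Real.exp ⟪x, a t⟫) * ⟪a t, w⟫ := by
      simp [ContinuousLinearMap.smul_apply, smul_eq_mul]
    rw [happ, Real.norm_eq_abs, abs_mul]
    have h1 : |c t * Real.exp ⟪x, a t⟫| ≤ K * Real.exp ((‖l₀‖ + 1) * M) := by
      rw [abs_mul, abs_of_pos (Real.exp_pos _)]
      exact mul_le_mul htK (Real.exp_le_exp.mpr hip) (Real.exp_pos _).le hK0
    have h2 : |⟪a t, w⟫| ≤ M * ‖w‖ :=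
      le_trans (abs_real_inner_le_norm _ _)
        (mul_le_mul_of_nonneg_right htM (norm_nonneg _))
    calc |c t * Real.exp ⟪x, a t⟫| * |⟪a t, w⟫|
        ≤ (K * Real.exp ((‖l₀‖ + 1) * M)) * (M * ‖w‖) :=
          mul_le_mul h1 h2 (abs_nonneg _) (by positivity)
      _ = K * Real.exp ((‖l₀‖ + 1) * M) * M * ‖w‖ := by ring
  have hint : Integrable (fun t => c t * Real.exp ⟪l₀, a t⟫) μ := by
    apply (integrable_const (K * Real.exp (‖l₀‖ * M))).mono' (hmeas l₀)
    filter_upwards [hM, hK] with t htM htK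
    rw [Real.norm_eq_abs, abs_mul, abs_of_pos (Real.exp_pos _)]
    have hip : ⟪l₀, a t⟫ ≤ ‖l₀‖ * M :=
      le_trans (real_inner_le_norm _ _) (mul_le_mul_of_nonneg_left htM (norm_nonneg _))
    exact mul_le_mul htK (Real.exp_le_exp.mpr hip) (Real.exp_pos _).le hK0
  have hder := hasFDerivAt_integral_of_dominated_of_fderiv_le (μ := μ)
      (F := fun l t => c t * Real.exp ⟪l, a t⟫)
      (F' := fun l t => (c t * Real.exp ⟪l, a t⟫) • innerSL ℝ (a t))
      (bound := fun _ => K * Real.exp ((‖l₀‖ + 1) * M) * M)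
      (Metric.ball_mem_nhds l₀ one_pos) (Filter.Eventually.of_forall hmeas) hint hF'meas hbnd (integrable_const _)
      (Filter.Eventually.of_forall fun t x _ => hdiff t x)
  refine ⟨hder, ?_⟩
  apply (integrable_const (K * Real.exp ((‖l₀‖ + 1) * M) * M)).mono' hF'meas
  filter_upwards [hbnd] with t ht
  exact ht l₀ (Metric.mem_ball_self one_pos)



/-- For the Shannon entropy, the Jacobian of the dual optimal Lagrange multiplier map
`b ↦ λ(b)` at `b₀` (equivalently, the Hessian of the singular potential `ψ_s`, since
`∇ψ_s = λ`) is the inverse of the covariance matrix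
`∫ a⊗a ρ_{b₀} dμ − b₀⊗b₀` of `a` under the maximal-entropy density
`ρ_b = exp(α(b) + λ(b)·a)` generating `b`. -/
theorem shannon_hessian_eq_inv_covariance {X : Type*} [MeasurableSpace X]
    (μ : Measure X) [IsFiniteMeasure μ] {k : ℕ}
    (a : X → EuclideanSpace ℝ (Fin k)) (ha : MemLp a ⊤ μ)
    (Q : Set (EuclideanSpace ℝ (Fin k))) (hQ : IsOpen Q)
    (α : EuclideanSpace ℝ (Fin k) → ℝ)
    (lam : EuclideanSpace ℝ (Fin k) → EuclideanSpace ℝ (Fin k))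
    (ρ : EuclideanSpace ℝ (Fin k) → X → ℝ)
    (hρ : ∀ b ∈ Q, ∀ t, ρ b t = Real.exp (α b + ⟪lam b, a t⟫))
    (hρint : ∀ b ∈ Q, Integrable (ρ b) μ)
    (hρint2 : ∀ b ∈ Q, ∀ i j, Integrable (fun t => a t i * a t j * ρ b t) μ)
    (hnorm : ∀ b ∈ Q, ∫ t, ρ b t ∂μ = 1)
    (hgen : ∀ b ∈ Q, ∀ i, ∫ t, a t i * ρ b t ∂μ = b i)
    (ψ : EuclideanSpace ℝ (Fin k) → ℝ)
    (hψgrad : ∀ b ∈ Q, HasGradientAt ψ (lam b) b)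
    (b₀ : EuclideanSpace ℝ (Fin k)) (hb₀ : b₀ ∈ Q)
    (Cov : Matrix (Fin k) (Fin k) ℝ)
    (hCov : ∀ i j, Cov i j = (∫ t, a t i * a t j * ρ b₀ t ∂μ) - b₀ i * b₀ j)
    (hCovinv : IsUnit Cov.det)
    (L : EuclideanSpace ℝ (Fin k) →L[ℝ] EuclideanSpace ℝ (Fin k))
    (hL : HasFDerivAt lam L b₀) :
    ∀ v : EuclideanSpace ℝ (Fin k), ∀ i,
      L v i = (Cov⁻¹).mulVec (fun j => v j) i := by
  intro v
  -- essential bound on a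
  set M : ℝ := (eLpNorm a ⊤ μ).toReal with hMdef
  have hM0 : 0 ≤ M := ENNReal.toReal_nonneg
  have hMlt : eLpNormEssSup a μ < ⊤ := by
    rw [← eLpNorm_exponent_top]; exact ha.2
  have hM : ∀ᵐ t ∂μ, ‖a t‖ ≤ M := by
    filter_upwards [enorm_ae_le_eLpNormEssSup a μ] with t ht
    calc ‖a t‖ = ((‖a t‖₊ : ℝ≥0∞)).toReal := by simp
      _ ≤ (eLpNormEssSup a μ).toReal := ENNReal.toReal_mono hMlt.ne ht
      _ = M := by rw [hMdef, eLpNorm_exponent_top]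
  have hcoordmeas : ∀ j, AEStronglyMeasurable (fun t => a t j) μ := fun j =>
    (EuclideanSpace.proj j (𝕜 := ℝ)).continuous.comp_aestronglyMeasurable ha.1
  have hρ0 : ∀ t, 0 ≤ ρ b₀ t := by
    intro t; rw [hρ b₀ hb₀ t]; positivity
  have haρ : ∀ j, Integrable (fun t => a t j * ρ b₀ t) μ := by
    intro j
    apply ((hρint b₀ hb₀).const_mul M).mono'
      (((hcoordmeas j).mul (hρint b₀ hb₀).1 :
        AEStronglyMeasurable (fun t => a t j * ρ b₀ t) μ))
    filter_upwards [hM] with t htM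
    simp only [Pi.mul_apply]
    rw [Real.norm_eq_abs, abs_mul, abs_of_nonneg (hρ0 t)]
    exact mul_le_mul_of_nonneg_right
      ((euclidean_abs_coord_le_norm (a t) j).trans htM) (hρ0 t)
  have hexp : ∀ b ∈ Q, ∀ t, Real.exp ⟪lam b, a t⟫ = Real.exp (-(α b)) * ρ b t := by
    intro b hb t; rw [hρ b hb t, ← Real.exp_add]; congr 1; ring
  set e : ℝ := Real.exp (-(α b₀)) with hedef
  have he : e ≠ 0 := Real.exp_ne_zero _
  have hZb : ∀ b ∈ Q, (∫ t, (1 : ℝ) * Real.exp ⟪lam b, a t⟫ ∂μ) = Real.exp (-(α b)) := by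
    intro b hb
    simp_rw [one_mul, hexp b hb]
    rw [integral_const_mul, hnorm b hb, mul_one]
  have hfb : ∀ b ∈ Q, ∀ i, (∫ t, a t i * Real.exp ⟪lam b, a t⟫ ∂μ)
      = Real.exp (-(α b)) * b i := by
    intro b hb i
    have hpt : ∀ t, a t i * Real.exp ⟪lam b, a t⟫
        = Real.exp (-(α b)) * (a t i * ρ b t) := by
      intro t; rw [hexp b hb t]; ring
    simp_rw [hpt]
    rw [integral_const_mul, hgen b hb i]
  -- derivative of the normalization integral
  obtain ⟨hZder, hZint⟩ := exp_integral_hasFDerivAt μ a ha (fun _ => (1 : ℝ))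
    aestronglyMeasurable_const 1 one_pos.le
    (Filter.Eventually.of_forall fun t => by norm_num) (lam b₀)
  have hZ0 : (∫ t, (1 : ℝ) * Real.exp ⟪lam b₀, a t⟫ ∂μ) = e := hZb b₀ hb₀
  have hZne : (∫ t, (1 : ℝ) * Real.exp ⟪lam b₀, a t⟫ ∂μ) ≠ 0 := by rw [hZ0]; exact he
  -- value of the derivative of Z applied to L v
  have hDZv : (∫ t, ((1 : ℝ) * Real.exp ⟪lam b₀, a t⟫) • innerSL ℝ (a t) ∂μ) (L v)
      = e * ∑ j, b₀ j * L v j := by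
    rw [ContinuousLinearMap.integral_apply hZint]
    have hpt : ∀ t, (((1 : ℝ) * Real.exp ⟪lam b₀, a t⟫) • innerSL ℝ (a t)) (L v)
        = ∑ j, (e * L v j) * (a t j * ρ b₀ t) := by
      intro t
      have hi : ⟪a t, L v⟫ = ∑ j, a t j * L v j := by
        simp [PiLp.inner_apply, RCLike.inner_apply, conj_trivial]
        exact Finset.sum_congr rfl fun j _ => mul_comm _ _
      simp only [ContinuousLinearMap.smul_apply, innerSL_apply_apply, smul_eq_mul, one_mul]
      rw [hi, hexp b₀ hb₀ t, Finset.mul_sum]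
      exact Finset.sum_congr rfl fun j _ => by ring
    simp_rw [hpt]
    rw [integral_finset_sum _ (fun j _ => (haρ j).const_mul _)]
    rw [Finset.mul_sum]
    refine Finset.sum_congr rfl fun j _ => ?_
    rw [integral_const_mul, hgen b₀ hb₀ j]; ring
  have hkey : ∀ i, v i = ∑ j, Cov i j * L v j := by
    intro i
    obtain ⟨hfder, hfint⟩ := exp_integral_hasFDerivAt μ a ha (fun t => a t i)
      (hcoordmeas i) M hM0
      (by filter_upwards [hM] with t ht
          exact (euclidean_abs_coord_le_norm (a t) i).trans ht) (lam b₀)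
    have hDFv : (∫ t, ((a t i) * Real.exp ⟪lam b₀, a t⟫) • innerSL ℝ (a t) ∂μ) (L v)
        = e * ∑ j, (∫ t, a t i * a t j * ρ b₀ t ∂μ) * L v j := by
      rw [ContinuousLinearMap.integral_apply hfint]
      have hpt : ∀ t, (((a t i) * Real.exp ⟪lam b₀, a t⟫) • innerSL ℝ (a t)) (L v)
          = ∑ j, (e * L v j) * (a t i * a t j * ρ b₀ t) := by
        intro t
        have hi : ⟪a t, L v⟫ = ∑ j, a t j * L v j := by
          simp [PiLp.inner_apply, RCLike.inner_apply, conj_trivial]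
          exact Finset.sum_congr rfl fun j _ => mul_comm _ _
        simp only [ContinuousLinearMap.smul_apply, innerSL_apply_apply, smul_eq_mul]
        rw [hi, hexp b₀ hb₀ t, Finset.mul_sum]
        exact Finset.sum_congr rfl fun j _ => by ring
      simp_rw [hpt]
      rw [integral_finset_sum _ (fun j _ => (hρint2 b₀ hb₀ i j).const_mul _)]
      rw [Finset.mul_sum]
      refine Finset.sum_congr rfl fun j _ => ?_
      rw [integral_const_mul]; ring
    -- quotient function and its derivative
    have hinv := (hasDerivAt_inv hZne).comp_hasFDerivAt (lam b₀) hZder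
    have hg := hfder.mul hinv
    have hcomp := hg.comp b₀ hL
    have heq : ((fun l => (∫ t, a t i * Real.exp ⟪l, a t⟫ ∂μ)
          * (∫ t, (1 : ℝ) * Real.exp ⟪l, a t⟫ ∂μ)⁻¹) ∘ lam)
        =ᶠ[nhds b₀] (fun b => b i) := by
      filter_upwards [hQ.mem_nhds hb₀] with b hb
      show (∫ t, a t i * Real.exp ⟪lam b, a t⟫ ∂μ)
          * (∫ t, (1 : ℝ) * Real.exp ⟪lam b, a t⟫ ∂μ)⁻¹ = b i
      rw [hfb b hb i, hZb b hb]
      field_simp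
    have hproj : HasFDerivAt (fun b : EuclideanSpace ℝ (Fin k) => b i)
        (EuclideanSpace.proj i (𝕜 := ℝ)) b₀ := (EuclideanSpace.proj i (𝕜 := ℝ)).hasFDerivAt
    have huniq := (hcomp.congr_of_eventuallyEq heq.symm).unique hproj
    have hval := congrArg (fun T : EuclideanSpace ℝ (Fin k) →L[ℝ] ℝ => T v) huniq
    simp only [ContinuousLinearMap.coe_comp', Function.comp_apply,
      ContinuousLinearMap.add_apply, ContinuousLinearMap.smul_apply, smul_eq_mul,
      PiLp.proj_apply] at hval
    rw [hDZv, hDFv, hfb b₀ hb₀ i, hZ0] at hval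
    -- hval : e * b₀ i * (-(e^2)⁻¹ • ... ) ... = v i  (shape to be fixed)
    have h2 : ∑ j, Cov i j * L v j
        = (∑ j, (∫ t, a t i * a t j * ρ b₀ t ∂μ) * L v j)
          - b₀ i * ∑ j, b₀ j * L v j := by
      rw [Finset.mul_sum, ← Finset.sum_sub_distrib]
      exact Finset.sum_congr rfl fun j _ => by rw [hCov i j]; ring
    rw [h2, ← hval]
    field_simp
    ring
  -- matrix algebra
  have hmv : Cov.mulVec (fun j => L v j) = (fun i => v i) := by
    funext i
    rw [Matrix.mulVec, dotProduct]
    exact (hkey i).symm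
  intro i
  have : (Cov⁻¹).mulVec (fun j => v j) = fun j => L v j := by
    calc (Cov⁻¹).mulVec (fun j => v j) = (Cov⁻¹).mulVec (Cov.mulVec (fun j => L v j)) := by
          rw [hmv]
      _ = (Cov⁻¹ * Cov).mulVec (fun j => L v j) := by rw [Matrix.mulVec_mulVec]
      _ = fun j => L v j := by rw [Matrix.nonsing_inv_mul _ hCovinv, Matrix.one_mulVec]
  rw [this]
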